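/- Let g be a real semisimple Lie algebra with Cartan involution θ, restricted root space decomposition g = m ⊕ a ⊕ ⊕_{β∈Σ} g^β, and let h ⊂ g be a Lie subalgebra containing m ⊕ a. If h ∩ g^β ≠ 0 for some restricted root β, then the Lie subalgebra generated by g^β is contained in h. -/
import Mathlib


open LieAlgebra

/-- The restricted root space of a real Lie algebra `L` relative to an abelian
subalgebra `a` and a linear functional `β` on `a`:
`{x ∈ L | ∀ h ∈ a, [h, x] = β(h) • x}`. -/
noncomputable def restrictedRootSpace {L : Type*} [LieRing L] [LieAlgebra ℝ L]
    (a : LieSubalgebra ℝ L) (β : Module.Dual ℝ a) : Submodule ℝ L :=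
  ⨅ h : a, Module.End.eigenspace (LieAlgebra.ad ℝ L (h : L)) (β h)

theorem aux_string {L : Type*} [LieRing L] [LieAlgebra ℝ L] [FiniteDimensional ℝ L]
    (X Y H0 v : L) (lam : ℝ) (hlam : 0 < lam)
    (hH0 : ⁅Y, X⁆ = H0) (hX : ⁅H0, X⁆ = lam • X)
    (hv : ⁅H0, v⁆ = lam • v) (hYv : ⁅Y, v⁆ = 0) : v = 0 := by
  by_contra hv0
  set w : ℕ → L := fun k => ((ad ℝ L X) ^ k) v with hw
  have hw0 : w 0 = v := rfl
  have hwsucc : ∀ k, w (k + 1) = ⁅X, w k⁆ := by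
    intro k
    simp [hw, pow_succ', Module.End.mul_apply, ad_apply]
  set c : ℕ → ℝ := fun k => lam * (k * (k + 1)) / 2 with hc
  have hcpos : ∀ k : ℕ, 0 < c (k + 1) := by
    intro k
    have : (0:ℝ) < ((k:ℝ) + 1) * ((k:ℝ) + 1 + 1) := by positivity
    simp only [hc]
    push_cast
    nlinarith
  have key : ∀ k : ℕ, ⁅H0, w k⁆ = (((k:ℝ) + 1) * lam) • w k ∧
      ⁅Y, w (k + 1)⁆ = c (k + 1) • w k := by
    intro k
    induction k with
    | zero =>
      constructor
      · simpa [hw0] using hv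
      · rw [hwsucc 0, leibniz_lie, hH0, hw0, hv, hYv, lie_zero, add_zero]
        have : c 1 = lam := by simp only [hc]; push_cast; ring
        rw [this]
    | succ n ih =>
      obtain ⟨ih1, ih2⟩ := ih
      have h1 : ⁅H0, w (n + 1)⁆ = (((n:ℝ) + 1 + 1) * lam) • w (n + 1) := by
        rw [hwsucc n, leibniz_lie, hX, ih1, smul_lie, lie_smul, ← hwsucc n]
        rw [← add_smul]; ring_nf
      refine ⟨by push_cast; exact h1, ?_⟩
      have h2 : ⁅Y, w (n + 2)⁆ = (((n:ℝ) + 1 + 1) * lam + c (n + 1)) • w (n + 1) := by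
        rw [hwsucc (n+1), leibniz_lie, hH0, h1, ih2, lie_smul, ← hwsucc n, add_smul]
      rw [h2]
      have : c (n + 2) = ((n:ℝ) + 1 + 1) * lam + c (n + 1) := by
        simp only [hc]; push_cast; ring
      rw [this]
  have hwne : ∀ k, w k ≠ 0 := by
    intro k
    induction k with
    | zero => simpa [hw0] using hv0
    | succ n ih =>
      intro hz
      have := (key n).2
      rw [hz, lie_zero] at this
      exact ih (smul_eq_zero_iff_right (ne_of_gt (hcpos n)) |>.mp this.symm)
  have heig : ∀ k : ℕ, Module.End.HasEigenvalue (ad ℝ L H0) (((k:ℝ) + 1) * lam) := by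
    intro k
    exact Module.End.hasEigenvalue_of_hasEigenvector
      ⟨Module.End.mem_eigenspace_iff.mpr (by rw [ad_apply]; exact (key k).1), hwne k⟩
  have hfin : Set.Finite (Module.End.HasEigenvalue (ad ℝ L H0)) :=
    Module.End.finite_hasEigenvalue (ad ℝ L H0)
  have hinf : Set.Infinite (Module.End.HasEigenvalue (ad ℝ L H0)) := by
    apply Set.infinite_of_injective_forall_mem
      (f := fun k : ℕ => ((k:ℝ) + 1) * lam) ?_ heig
    intro m n hmn
    simp only at hmn
    have := mul_right_cancel₀ (ne_of_gt hlam) hmn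
    exact_mod_cast add_right_cancel this
  exact hinf hfin

/-- Maximality: any `θ`-anti-invariant element centralizing `a` lies in `a`. -/
theorem aux_max {L : Type*} [LieRing L] [LieAlgebra ℝ L]
    (θ : L ≃ₗ⁅ℝ⁆ L) (a : LieSubalgebra ℝ L)
    (ha_p : ∀ x ∈ a, θ x = -x) (ha_ab : IsLieAbelian a)
    (ha_max : ∀ a' : LieSubalgebra ℝ L,
      (∀ x ∈ a', θ x = -x) → IsLieAbelian a' → a ≤ a' → a' = a)
    (z : L) (hzp : θ z = -z) (hzc : ∀ y ∈ a, ⁅y, z⁆ = 0) : z ∈ a := by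
  set S : Submodule ℝ L := a.toSubmodule ⊔ (ℝ ∙ z) with hS
  have hmem : ∀ x, x ∈ S ↔ ∃ y ∈ a, ∃ t : ℝ, x = y + t • z := by
    intro x
    rw [hS, Submodule.mem_sup]
    constructor
    · rintro ⟨y, hy, w, hw, rfl⟩
      obtain ⟨t, rfl⟩ := Submodule.mem_span_singleton.mp hw
      exact ⟨y, hy, t, rfl⟩
    · rintro ⟨y, hy, t, rfl⟩
      exact ⟨y, hy, t • z, Submodule.mem_span_singleton.mpr ⟨t, rfl⟩, rfl⟩
  have habel : ∀ y ∈ a, ∀ y' ∈ a, ⁅y, y'⁆ = (0:L) := by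
    intro y hy y' hy'
    have h0 : (⁅(⟨y, hy⟩ : a), (⟨y', hy'⟩ : a)⁆ : a) = 0 := trivial_lie_zero _ _ _ _
    have h1 : ((⁅(⟨y, hy⟩ : a), (⟨y', hy'⟩ : a)⁆ : a) : L) = ⁅y, y'⁆ :=
      LieSubalgebra.coe_bracket a ⟨y, hy⟩ ⟨y', hy'⟩
    rw [← h1, h0]
    rfl
  have hcomm : ∀ x ∈ S, ∀ x' ∈ S, ⁅x, x'⁆ = (0:L) := by
    intro x hx x' hx'
    obtain ⟨y, hy, t, rfl⟩ := (hmem x).mp hx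
    obtain ⟨y', hy', t', rfl⟩ := (hmem x').mp hx'
    have h1 : ⁅y, y'⁆ = (0:L) := habel y hy y' hy'
    have h2 : ⁅y, z⁆ = (0:L) := hzc y hy
    have h3 : ⁅z, y'⁆ = (0:L) := by
      rw [← lie_skew, hzc y' hy', neg_zero]
    simp [lie_add, add_lie, lie_smul, smul_lie, h1, h2, h3]
  set a' : LieSubalgebra ℝ L :=
    { toSubmodule := S
      lie_mem' := fun {x y} hx hy => by
        rw [hcomm x hx y hy]; exact S.zero_mem } with ha'
  have hmema' : ∀ x, x ∈ a' ↔ x ∈ S := fun x => Iff.rfl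
  have θadd : ∀ x y : L, θ (x + y) = θ x + θ y := fun x y => θ.toLinearEquiv.map_add x y
  have θsmul : ∀ (c : ℝ) (x : L), θ (c • x) = c • θ x := fun c x => θ.toLinearEquiv.map_smul c x
  have h1 : ∀ x ∈ a', θ x = -x := by
    intro x hx
    obtain ⟨y, hy, t, rfl⟩ := (hmem x).mp hx
    rw [θadd, θsmul, ha_p y hy, hzp]
    module
  have h2 : IsLieAbelian a' := by
    constructor
    intro x y
    apply Subtype.ext
    have : (⁅x, y⁆ : a').val = ⁅x.val, y.val⁆ := rfl
    rw [this, hcomm x.val x.2 y.val y.2]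
    rfl
  have h3 : a ≤ a' := fun x hx => by
    rw [hmema', hS]
    exact Submodule.mem_sup_left hx
  have := ha_max a' h1 h2 h3
  rw [← this, hmema', hmem]
  exact ⟨0, a.zero_mem, 1, by simp⟩

/-- Let `g` be a real semisimple Lie algebra with Cartan involution `θ`, `a` a maximal
abelian subalgebra of the `(−1)`-eigenspace `p` of `θ`, and `h` a Lie subalgebra of `g`
containing `m ⊕ a` (where `m` is the centralizer of `a` in the `(+1)`-eigenspace `k`).
If `h ∩ g^β ≠ 0` for a restricted root `β`, then the Lie subalgebra generated by the
full restricted root space `g^β` is contained in `h`. -/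
theorem stmt4 {L : Type*} [LieRing L] [LieAlgebra ℝ L] [FiniteDimensional ℝ L]
    [LieAlgebra.IsSemisimple ℝ L]
    (θ : L ≃ₗ⁅ℝ⁆ L) (hθinv : ∀ x, θ (θ x) = x)
    (hθcartan : ∀ x : L, x ≠ 0 → 0 < -(killingForm ℝ L x (θ x)))
    (a : LieSubalgebra ℝ L)
    (ha_p : ∀ x ∈ a, θ x = -x) (ha_ab : IsLieAbelian a)
    (ha_max : ∀ a' : LieSubalgebra ℝ L,
      (∀ x ∈ a', θ x = -x) → IsLieAbelian a' → a ≤ a' → a' = a)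
    (h : LieSubalgebra ℝ L)
    (hma : ∀ x : L, θ x = x → (∀ y ∈ a, ⁅y, x⁆ = 0) → x ∈ h)
    (hah : a ≤ h)
    (β : Module.Dual ℝ a) (hβ : β ≠ 0)
    (hnz : restrictedRootSpace a β ⊓ h.toSubmodule ≠ ⊥) :
    LieSubalgebra.lieSpan ℝ L (restrictedRootSpace a β : Set L) ≤ h := by
  classical
  have θadd : ∀ x y : L, θ (x + y) = θ x + θ y := fun x y => θ.toLinearEquiv.map_add x y
  have θsmul : ∀ (c : ℝ) (x : L), θ (c • x) = c • θ x := fun c x => θ.toLinearEquiv.map_smul c x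
  have θneg : ∀ x : L, θ (-x) = -θ x := fun x => θ.toLinearEquiv.map_neg x
  have θsub : ∀ x y : L, θ (x - y) = θ x - θ y := fun x y => θ.toLinearEquiv.map_sub x y
  have θzero : θ 0 = 0 := θ.toLinearEquiv.map_zero
  set V := restrictedRootSpace a β with hV
  have memV : ∀ x : L, x ∈ V ↔ ∀ H : a, ⁅(H:L), x⁆ = β H • x := by
    intro x
    simp [hV, restrictedRootSpace, Submodule.mem_iInf, Module.End.mem_eigenspace_iff,
      ad_apply]
  -- pick a nonzero X ∈ V ∩ h
  obtain ⟨X, hXmem, hX0⟩ := Submodule.ne_bot_iff _ |>.mp hnz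
  obtain ⟨hXV, hXh⟩ := Submodule.mem_inf.mp hXmem
  have hXV' := (memV X).mp hXV
  -- θ X has weight -β
  have hθXw : ∀ H : a, ⁅(H:L), θ X⁆ = -(β H) • θ X := by
    intro H
    have h1 : ((H:L)) = θ (θ (H:L)) := (hθinv _).symm
    calc ⁅(H:L), θ X⁆ = ⁅θ (θ (H:L)), θ X⁆ := by rw [← h1]
      _ = θ ⁅θ (H:L), X⁆ := by rw [θ.map_lie]
      _ = θ ⁅-(H:L), X⁆ := by rw [ha_p _ H.2]
      _ = -(β H) • θ X := by rw [neg_lie, hXV' H, θneg, θsmul, ← neg_smul]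
  -- H0
  set H0 : L := ⁅θ X, X⁆ with hH0def
  have hH0p : θ H0 = -H0 := by
    rw [hH0def, θ.map_lie, hθinv]
    exact (lie_skew X (θ X)).symm
  have hH0c : ∀ y ∈ a, ⁅y, H0⁆ = 0 := by
    intro y hy
    have : ⁅y, H0⁆ = ⁅⁅y, θ X⁆, X⁆ + ⁅θ X, ⁅y, X⁆⁆ := leibniz_lie y (θ X) X
    rw [this, hθXw ⟨y, hy⟩, hXV' ⟨y, hy⟩, smul_lie, lie_smul, neg_smul]
    simp
  have hH0a : H0 ∈ a := aux_max θ a ha_p ha_ab ha_max H0 hH0p hH0c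
  -- Killing form facts
  have hκXθX : killingForm ℝ L X (θ X) < 0 := by
    have := hθcartan X hX0
    linarith
  have hκ : ∀ H : a, killingForm ℝ L (H : L) H0 = -(β H) * killingForm ℝ L X (θ X) := by
    intro H
    have h1 : killingForm ℝ L ⁅(H:L), θ X⁆ X = killingForm ℝ L (H:L) ⁅θ X, X⁆ :=
      LieModule.traceForm_apply_lie_apply ℝ L L (H:L) (θ X) X
    rw [hθXw H] at h1
    rw [hH0def, ← h1]
    simp only [smul_lie, neg_smul, map_neg, map_smul, LinearMap.neg_apply, LinearMap.smul_apply]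
    rw [LieModule.traceForm_comm ℝ L L (θ X) X, smul_eq_mul, neg_mul]
  have hH0ne : H0 ≠ 0 := by
    intro hz
    obtain ⟨H1, hH1⟩ : ∃ H1 : a, β H1 ≠ 0 := by
      by_contra hc
      push_neg at hc
      exact hβ (LinearMap.ext hc)
    have h2 := hκ H1
    rw [hz, map_zero] at h2
    rcases mul_eq_zero.mp h2.symm with h' | h'
    · exact hH1 (by linarith [neg_eq_zero.mp h'])
    · exact absurd h' (ne_of_lt hκXθX)
  have hκH0 : 0 < killingForm ℝ L H0 H0 := by
    have := hθcartan H0 hH0ne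
    rw [hH0p] at this
    simp only [map_neg] at this
    linarith [this]
  set lam : ℝ := β ⟨H0, hH0a⟩ with hlamdef
  have hlam : 0 < lam := by
    have := hκ ⟨H0, hH0a⟩
    simp only at this
    nlinarith
  -- the operator T = ad X ∘ ad θX
  set T : L →ₗ[ℝ] L := (ad ℝ L X) ∘ₗ (ad ℝ L (θ X)) with hT
  have hTapply : ∀ v : L, T v = ⁅X, ⁅θ X, v⁆⁆ := by
    intro v; simp [hT, ad_apply]
  -- for v ∈ V, ⁅θX, v⁆ centralizes a
  have hucent : ∀ v ∈ V, ∀ y ∈ a, ⁅y, ⁅θ X, v⁆⁆ = 0 := by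
    intro v hv y hy
    have hv' := (memV v).mp hv
    rw [leibniz_lie, hθXw ⟨y, hy⟩, hv' ⟨y, hy⟩, smul_lie, lie_smul, neg_smul]
    simp
  -- for v ∈ V, ⁅θX, v⁆ ∈ h
  have huh : ∀ v ∈ V, ⁅θ X, v⁆ ∈ h := by
    intro v hv
    set u : L := ⁅θ X, v⁆ with hu
    have hcu : ∀ y ∈ a, ⁅y, u⁆ = 0 := hucent v hv
    have hcθu : ∀ y ∈ a, ⁅y, θ u⁆ = 0 := by
      intro y hy
      have h1 : (y:L) = θ (θ y) := (hθinv _).symm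
      calc ⁅y, θ u⁆ = ⁅θ (θ y), θ u⁆ := by rw [← h1]
        _ = θ ⁅θ y, u⁆ := (θ.map_lie (θ y) u).symm
        _ = θ ⁅-y, u⁆ := by rw [ha_p _ hy]
        _ = 0 := by rw [neg_lie, hcu y hy, neg_zero, θzero]
    -- decompose u
    have hdecomp : u = (2⁻¹ : ℝ) • (u + θ u) + (2⁻¹ : ℝ) • (u - θ u) := by
      module
    have hk : (2⁻¹ : ℝ) • (u + θ u) ∈ h := by
      apply hma
      · rw [θsmul, θadd, hθinv]
        module
      · intro y hy
        rw [lie_smul, lie_add, hcu y hy, hcθu y hy, add_zero, smul_zero]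
    have hp : (2⁻¹ : ℝ) • (u - θ u) ∈ h := by
      apply hah
      apply LieSubalgebra.smul_mem
      apply aux_max θ a ha_p ha_ab ha_max
      · rw [θsub, hθinv]
        module
      · intro y hy
        rw [lie_sub, hcu y hy, hcθu y hy, sub_zero]
    rw [hdecomp]
    exact h.add_mem hk hp
  -- T maps V into V and into h
  have hTV : ∀ v ∈ V, T v ∈ V := by
    intro v hv
    rw [memV]
    intro H
    rw [hTapply, leibniz_lie, hucent v hv H H.2, lie_zero, add_zero, hXV' H, smul_lie]
  have hTh : ∀ v ∈ V, T v ∈ h := by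
    intro v hv
    rw [hTapply]
    exact h.lie_mem hXh (huh v hv)
  -- T is injective on V
  have hTinj : ∀ v ∈ V, T v = 0 → v = 0 := by
    intro v hv hTv
    set u : L := ⁅θ X, v⁆ with hu
    have hκTv : killingForm ℝ L (T v) (θ v) = -(killingForm ℝ L u (θ u)) := by
      rw [hTapply]
      have h1 : ⁅X, u⁆ = -⁅u, X⁆ := (lie_skew X u).symm
      rw [← hu, h1, map_neg, LinearMap.neg_apply]
      have h2 : killingForm ℝ L ⁅u, X⁆ (θ v) = killingForm ℝ L u ⁅X, θ v⁆ :=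
        LieModule.traceForm_apply_lie_apply ℝ L L u X (θ v)
      rw [h2]
      have h3 : ⁅X, θ v⁆ = θ u := by
        rw [hu, θ.map_lie, hθinv]
      rw [h3]
    rw [hTv, map_zero, LinearMap.zero_apply] at hκTv
    have hu0 : u = 0 := by
      by_contra hu0
      have := hθcartan u hu0
      rw [← hκTv] at this
      linarith
    -- now apply aux_string
    have hv' := (memV v).mp hv
    exact aux_string X (θ X) H0 v lam hlam rfl (hXV' ⟨H0, hH0a⟩) (hv' ⟨H0, hH0a⟩) hu0
  -- conclude V ⊆ h
  have hVh : (V : Set L) ⊆ h := by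
    intro y hy
    set T' : V →ₗ[ℝ] V := T.restrict hTV with hT'
    have hinj : Function.Injective T' := by
      rw [← LinearMap.ker_eq_bot, LinearMap.ker_eq_bot']
      intro m hm
      apply Subtype.ext
      apply hTinj m.val m.2
      have := congrArg Subtype.val hm
      simpa [hT', LinearMap.restrict_apply] using this
    have hsurj : Function.Surjective T' := (LinearMap.injective_iff_surjective).mp hinj
    obtain ⟨v, hv⟩ := hsurj ⟨y, hy⟩
    have : T v.val = y := by
      have := congrArg Subtype.val hv
      simpa [hT', LinearMap.restrict_apply] using this
    rw [← this]
    exact hTh v.val v.2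
  exact (LieSubalgebra.lieSpan_le).mpr hVh
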